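/- Let ((ΔYᵢ, Rᵢ, Uᵢ, D*ᵢ, Δξᵢ))_{i∈ℕ} be an i.i.d. sequence of copies of (ΔY, R, U, D*, Δξ) on a probability space, where: R : Ω → ℝ^k; U is a real random variable independent of R with standard Gaussian law; D* := 1{⟪R, γ⟫ + U ≥ 0} for a fixed γ ∈ ℝ^k; Δξ is a real random variable with E[Δξ | σ(R)] = 0 almost surely; and ΔY = δ + τ·D* + Δξ almost surely for constants δ, τ ∈ ℝ, with E[ΔY²] < ∞, E[‖R‖²] < ∞ and E[‖R‖·|ΔY|] < ∞. Let (γ̂_N)_{N∈ℕ} be random vectors in ℝ^k converging in probability to γ, write pᵢ_N := Φ(⟪Rᵢ, γ̂_N⟫) with Φ the standard normal CDF, and define the two-step slope estimator τ̂_N := [∑_{i<N}(pᵢ_N − p̄_N)(ΔYᵢ − ΔȲ_N)] / [∑_{i<N}(pᵢ_N − p̄_N)²], where p̄_N and ΔȲ_N are the respective sample means (τ̂_N defined whenever the denominator is nonzero). If Var(Φ(⟪R, γ⟫)) > 0, then τ̂_N converges in probability to τ. -/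

import Mathlib

open MeasureTheory ProbabilityTheory Filter
open scoped Matrix

/-- The standard normal density. -/
noncomputable def stdNormalPDF (x : ℝ) : ℝ :=
  (Real.sqrt (2 * Real.pi))⁻¹ * Real.exp (-x ^ 2 / 2)

/-- The standard normal CDF `Φ(x) = ∫_{−∞}^x (2π)^{−1/2} e^{−t²/2} dt`. -/
noncomputable def stdNormalCDF (x : ℝ) : ℝ :=
  ∫ t in Set.Iic x, stdNormalPDF t

open scoped Topology

lemma stdNormalPDF_eq_gauss : stdNormalPDF = gaussianPDFReal 0 1 := by
  funext x
  simp [stdNormalPDF, gaussianPDFReal, neg_div]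

lemma stdNormalPDF_nonneg (x : ℝ) : 0 ≤ stdNormalPDF x := by
  rw [stdNormalPDF_eq_gauss]; exact gaussianPDFReal_nonneg 0 1 x

lemma stdNormalPDF_le (x : ℝ) : stdNormalPDF x ≤ (Real.sqrt (2 * Real.pi))⁻¹ := by
  have h1 : Real.exp (-x ^ 2 / 2) ≤ 1 := by
    rw [Real.exp_le_one_iff]
    nlinarith [sq_nonneg x]
  have h2 : (0:ℝ) < (Real.sqrt (2 * Real.pi))⁻¹ := by
    positivity
  calc stdNormalPDF x ≤ (Real.sqrt (2 * Real.pi))⁻¹ * 1 := by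
        exact mul_le_mul_of_nonneg_left h1 h2.le
    _ = _ := mul_one _

lemma integrable_stdNormalPDF : Integrable stdNormalPDF := by
  rw [stdNormalPDF_eq_gauss]; exact integrable_gaussianPDFReal 0 1

lemma integral_stdNormalPDF : ∫ x, stdNormalPDF x = 1 := by
  rw [stdNormalPDF_eq_gauss]; exact integral_gaussianPDFReal_eq_one 0 one_ne_zero

lemma stdNormalCDF_nonneg (x : ℝ) : 0 ≤ stdNormalCDF x :=
  integral_nonneg fun t => stdNormalPDF_nonneg t

lemma stdNormalCDF_le_one (x : ℝ) : stdNormalCDF x ≤ 1 := by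
  rw [stdNormalCDF, ← integral_stdNormalPDF]
  exact setIntegral_le_integral integrable_stdNormalPDF
    (ae_of_all _ fun t => stdNormalPDF_nonneg t)

lemma stdNormalCDF_sub {a b : ℝ} (hab : a ≤ b) :
    stdNormalCDF b - stdNormalCDF a = ∫ t in Set.Ioc a b, stdNormalPDF t := by
  rw [stdNormalCDF, stdNormalCDF, sub_eq_iff_eq_add',
    ← setIntegral_union (Set.Iic_disjoint_Ioc le_rfl) measurableSet_Ioc
      integrable_stdNormalPDF.integrableOn integrable_stdNormalPDF.integrableOn,
    Set.Iic_union_Ioc_eq_Iic hab]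

lemma lipschitz_stdNormalCDF {a b : ℝ} :
    |stdNormalCDF b - stdNormalCDF a| ≤ (Real.sqrt (2 * Real.pi))⁻¹ * |b - a| := by
  wlog hab : a ≤ b with H
  · have := H (a := b) (b := a) (le_of_not_ge hab)
    rwa [abs_sub_comm, abs_sub_comm a b] at this
  rw [stdNormalCDF_sub hab, abs_of_nonneg (integral_nonneg fun t => stdNormalPDF_nonneg t),
    abs_of_nonneg (sub_nonneg.2 hab)]
  calc ∫ t in Set.Ioc a b, stdNormalPDF t
      ≤ ∫ _t in Set.Ioc a b, (Real.sqrt (2 * Real.pi))⁻¹ := by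
        apply setIntegral_mono_on integrable_stdNormalPDF.integrableOn
          (integrableOn_const measure_Ioc_lt_top.ne) measurableSet_Ioc
        intro t _; exact stdNormalPDF_le t
    _ = (Real.sqrt (2 * Real.pi))⁻¹ * (b - a) := by
        simp [Real.volume_Ioc, ENNReal.toReal_ofReal (sub_nonneg.2 hab), mul_comm, hab]

lemma continuous_stdNormalCDF : Continuous stdNormalCDF := by
  have : LipschitzWith (Real.toNNReal (Real.sqrt (2 * Real.pi))⁻¹) stdNormalCDF := by
    apply LipschitzWith.of_dist_le_mul
    intro x y
    have h := lipschitz_stdNormalCDF (a := y) (b := x)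
    rw [Real.dist_eq, Real.dist_eq]
    refine h.trans (mul_le_mul_of_nonneg_right ?_ (abs_nonneg _))
    rw [Real.coe_toNNReal _ (by positivity)]
  exact this.continuous

lemma stdNormalPDF_even (x : ℝ) : stdNormalPDF (-x) = stdNormalPDF x := by
  simp [stdNormalPDF, neg_pow]

lemma gaussianReal_Ici_toReal (c : ℝ) :
    ((gaussianReal 0 1) (Set.Ici (-c))).toReal = stdNormalCDF c := by
  rw [gaussianReal_apply_eq_integral 0 one_ne_zero,
    ENNReal.toReal_ofReal (integral_nonneg fun t => gaussianPDFReal_nonneg 0 1 t),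
    ← stdNormalPDF_eq_gauss]
  rw [stdNormalCDF]
  have : ∀ x : ℝ, stdNormalPDF x = stdNormalPDF (-x) := fun x => (stdNormalPDF_even x).symm
  calc ∫ x in Set.Ici (-c), stdNormalPDF x
      = ∫ x in Set.Ioi (-c), stdNormalPDF x := integral_Ici_eq_integral_Ioi
    _ = ∫ x in Set.Ioi (-c), stdNormalPDF (-x) := by
        exact setIntegral_congr_fun measurableSet_Ioi fun x _ => this x
    _ = ∫ x in Set.Iic c, stdNormalPDF x := by
        rw [integral_comp_neg_Ioi]; simp

lemma measurable_stdNormalCDF : Measurable stdNormalCDF := continuous_stdNormalCDF.measurable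

/-- Key identity: `E[f(R) · 1{0 ≤ ⟪R,γ⟫ + U}] = E[f(R) · Φ(⟪R,γ⟫)]` when `U ⊥ R`, `U ~ N(0,1)`. -/
lemma gauss_indicator_integral {Ω : Type*} [MeasureSpace Ω] [IsProbabilityMeasure (ℙ : Measure Ω)]
    {k : ℕ} (R : Ω → (Fin k → ℝ)) (U : Ω → ℝ) (hR : Measurable R) (hU : Measurable U)
    (hUR : IndepFun U R (ℙ : Measure Ω))
    (hUgauss : Measure.map U (ℙ : Measure Ω) = gaussianReal 0 1)
    (γ : Fin k → ℝ) (f : (Fin k → ℝ) → ℝ) (hf : Measurable f) (hfb : ∀ r, |f r| ≤ 1) :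
    ∫ ω, f (R ω) * (if 0 ≤ R ω ⬝ᵥ γ + U ω then (1:ℝ) else 0) ∂(ℙ : Measure Ω)
      = ∫ ω, f (R ω) * stdNormalCDF (R ω ⬝ᵥ γ) ∂(ℙ : Measure Ω) := by
  classical
  have hdot : Measurable fun r : Fin k → ℝ => r ⬝ᵥ γ := by
    apply Finset.measurable_sum
    intro i _
    exact (measurable_pi_apply i).mul_const _
  set F : ℝ × (Fin k → ℝ) → ℝ := fun p => f p.2 * (if 0 ≤ p.2 ⬝ᵥ γ + p.1 then (1:ℝ) else 0)
    with hF
  have hFmeas : Measurable F := by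
    apply (hf.comp measurable_snd).mul
    exact Measurable.ite
      (measurableSet_le measurable_const
        ((hdot.comp measurable_snd).add measurable_fst))
      measurable_const measurable_const
  have hmap : Measure.map (fun ω => (U ω, R ω)) (ℙ : Measure Ω)
      = (Measure.map U ℙ).prod (Measure.map R ℙ) :=
    (indepFun_iff_map_prod_eq_prod_map_map hU.aemeasurable hR.aemeasurable).mp hUR
  have hLHS : ∫ ω, f (R ω) * (if 0 ≤ R ω ⬝ᵥ γ + U ω then (1:ℝ) else 0) ∂(ℙ : Measure Ω)
      = ∫ p, F p ∂((Measure.map U ℙ).prod (Measure.map R ℙ)) := by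
    rw [← hmap, integral_map (hU.prodMk hR).aemeasurable hFmeas.aestronglyMeasurable]
  rw [hLHS]
  haveI : IsProbabilityMeasure (Measure.map U (ℙ : Measure Ω)) :=
    Measure.isProbabilityMeasure_map hU.aemeasurable
  haveI : IsProbabilityMeasure (Measure.map R (ℙ : Measure Ω)) :=
    Measure.isProbabilityMeasure_map hR.aemeasurable
  have hFint : Integrable F ((Measure.map U ℙ).prod (Measure.map R ℙ)) := by
    apply Integrable.mono' (integrable_const (1:ℝ)) hFmeas.aestronglyMeasurable
    filter_upwards with p
    rw [hF]
    simp only [norm_mul, Real.norm_eq_abs]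
    by_cases h : 0 ≤ p.2 ⬝ᵥ γ + p.1
    · rw [if_pos h, abs_one, mul_one]; exact hfb p.2
    · simp [if_neg h]
  rw [integral_prod_symm _ hFint]
  have hinner : ∀ r : Fin k → ℝ,
      ∫ u, F (u, r) ∂(Measure.map U ℙ) = f r * stdNormalCDF (r ⬝ᵥ γ) := by
    intro r
    have : ∀ u : ℝ, F (u, r) = f r * Set.indicator (Set.Ici (-(r ⬝ᵥ γ))) (fun _ => (1:ℝ)) u := by
      intro u
      rw [hF]
      simp only [Set.indicator_apply, Set.mem_Ici]
      congr 1
      by_cases h : 0 ≤ r ⬝ᵥ γ + u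
      · rw [if_pos h, if_pos (by linarith)]
      · rw [if_neg h, if_neg (by intro hc; apply h; linarith)]
    simp_rw [this]
    rw [integral_const_mul, integral_indicator_const _ measurableSet_Ici, smul_eq_mul, mul_one,
      hUgauss, measureReal_def, gaussianReal_Ici_toReal]
  calc ∫ r, ∫ u, F (u, r) ∂(Measure.map U ℙ) ∂(Measure.map R ℙ)
      = ∫ r, f r * stdNormalCDF (r ⬝ᵥ γ) ∂(Measure.map R ℙ) := by
        exact integral_congr_ae (ae_of_all _ hinner)
    _ = ∫ ω, f (R ω) * stdNormalCDF (R ω ⬝ᵥ γ) ∂(ℙ : Measure Ω) := by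
        rw [integral_map hR.aemeasurable]
        exact (hf.mul (measurable_stdNormalCDF.comp hdot)).aestronglyMeasurable

lemma tendsto_mean_perturbed {b r : ℕ → ℝ} {a : ℕ → ℕ → ℝ} {e : ℕ → ℝ} {M : ℕ → ℕ}
    {L Mr : ℝ}
    (hM : Tendsto M atTop atTop)
    (hab : ∀ n i, |a n i - b i| ≤ e n * r i)
    (he : Tendsto e atTop (𝓝 0))
    (hb : Tendsto (fun N : ℕ => (∑ i ∈ Finset.range N, b i) / N) atTop (𝓝 L))
    (hr : Tendsto (fun N : ℕ => (∑ i ∈ Finset.range N, r i) / N) atTop (𝓝 Mr)) :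
    Tendsto (fun n => (∑ i ∈ Finset.range (M n), a n i) / (M n)) atTop (𝓝 L) := by
  have key : ∀ n, ‖(∑ i ∈ Finset.range (M n), a n i) / (M n)
      - (∑ i ∈ Finset.range (M n), b i) / (M n)‖
      ≤ e n * ((∑ i ∈ Finset.range (M n), r i) / (M n)) := by
    intro n
    rw [Real.norm_eq_abs, div_sub_div_same, abs_div, Nat.abs_cast, mul_div_assoc',
      div_eq_mul_inv, div_eq_mul_inv]
    apply mul_le_mul_of_nonneg_right ?_ (by positivity)
    rw [← Finset.sum_sub_distrib]
    refine (Finset.abs_sum_le_sum_abs _ _).trans ?_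
    rw [Finset.mul_sum]
    exact Finset.sum_le_sum fun i _ => hab n i
  have hdiff : Tendsto (fun n => (∑ i ∈ Finset.range (M n), a n i) / (M n)
      - (∑ i ∈ Finset.range (M n), b i) / (M n)) atTop (𝓝 0) := by
    have h2 : Tendsto (fun n => e n * ((∑ i ∈ Finset.range (M n), r i) / (M n)))
        atTop (𝓝 (0 * Mr)) := he.mul (hr.comp hM)
    rw [zero_mul] at h2
    exact squeeze_zero_norm key h2
  have := (hb.comp hM).add hdiff
  rw [add_zero] at this
  refine this.congr fun n => ?_
  simp only [Function.comp]
  ring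

lemma centered_sum_div (N : ℕ) (hN : (N:ℝ) ≠ 0) (f g : ℕ → ℝ) :
    (∑ i ∈ Finset.range N,
        (f i - (∑ j ∈ Finset.range N, f j)/N) * (g i - (∑ j ∈ Finset.range N, g j)/N)) / N
      = (∑ i ∈ Finset.range N, f i * g i)/N
        - ((∑ j ∈ Finset.range N, f j)/N) * ((∑ j ∈ Finset.range N, g j)/N) := by
  set A := ∑ j ∈ Finset.range N, f j with hA
  set B := ∑ j ∈ Finset.range N, g j with hB
  have expand : ∑ i ∈ Finset.range N, (f i - A/N) * (g i - B/N)
      = (∑ i ∈ Finset.range N, f i * g i) - (B/N) * A - (A/N) * B + N * ((A/N)*(B/N)) := by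
    have : ∀ i, (f i - A/N) * (g i - B/N)
        = f i * g i - (B/N) * f i - (A/N) * g i + (A/N)*(B/N) := fun i => by ring
    rw [Finset.sum_congr rfl fun i _ => this i]
    rw [Finset.sum_add_distrib, Finset.sum_sub_distrib, Finset.sum_sub_distrib,
      ← Finset.mul_sum, ← Finset.mul_sum, Finset.sum_const, Finset.card_range,
      nsmul_eq_mul, ← hA, ← hB]
  rw [expand]
  field_simp
  ring

lemma div_div_div_same (a b c : ℝ) (hc : c ≠ 0) : (a/c)/(b/c) = a/b := by
  rcases eq_or_ne b 0 with rfl | hb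
  · simp
  · field_simp

/-- Deterministic core: convergence of the two-step slope along a subsequence. -/
lemma det_estimator_tendsto {p Y r : ℕ → ℝ} {q : ℕ → ℕ → ℝ} {e : ℕ → ℝ} {M : ℕ → ℕ}
    {mp mp2 mpy my mr mry v τ : ℝ}
    (hM : Tendsto M atTop atTop)
    (hqp : ∀ n i, |q n i - p i| ≤ e n * r i)
    (hq1 : ∀ n i, |q n i + p i| ≤ 2)
    (he : Tendsto e atTop (𝓝 0))
    (hmp : Tendsto (fun N : ℕ => (∑ i ∈ Finset.range N, p i) / N) atTop (𝓝 mp))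
    (hmp2 : Tendsto (fun N : ℕ => (∑ i ∈ Finset.range N, p i ^ 2) / N) atTop (𝓝 mp2))
    (hmpy : Tendsto (fun N : ℕ => (∑ i ∈ Finset.range N, p i * Y i) / N) atTop (𝓝 mpy))
    (hmy : Tendsto (fun N : ℕ => (∑ i ∈ Finset.range N, Y i) / N) atTop (𝓝 my))
    (hmr : Tendsto (fun N : ℕ => (∑ i ∈ Finset.range N, r i) / N) atTop (𝓝 mr))
    (hmry : Tendsto (fun N : ℕ => (∑ i ∈ Finset.range N, r i * |Y i|) / N) atTop (𝓝 mry))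
    (hcov : mpy - mp * my = τ * v)
    (hvdef : mp2 - mp ^ 2 = v)
    (hv : 0 < v) :
    Tendsto (fun n =>
      (∑ i ∈ Finset.range (M n),
          (q n i - (∑ j ∈ Finset.range (M n), q n j) / (M n))
            * (Y i - (∑ j ∈ Finset.range (M n), Y j) / (M n)))
        / (∑ i ∈ Finset.range (M n),
          (q n i - (∑ j ∈ Finset.range (M n), q n j) / (M n)) ^ 2))
      atTop (𝓝 τ) := by
  -- means of perturbed sequences
  have hmq : Tendsto (fun n => (∑ i ∈ Finset.range (M n), q n i) / (M n)) atTop (𝓝 mp) :=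
    tendsto_mean_perturbed hM hqp he hmp hmr
  have hmq2 : Tendsto (fun n => (∑ i ∈ Finset.range (M n), (q n i) ^ 2) / (M n)) atTop (𝓝 mp2) := by
    refine tendsto_mean_perturbed (e := fun n => 2 * e n) hM (fun n i => ?_)
      (by simpa using he.const_mul 2) hmp2 hmr
    have : q n i ^ 2 - p i ^ 2 = (q n i - p i) * (q n i + p i) := by ring
    rw [this, abs_mul]
    calc |q n i - p i| * |q n i + p i| ≤ (e n * r i) * 2 :=
          mul_le_mul (hqp n i) (hq1 n i) (abs_nonneg _)
            (le_trans (abs_nonneg _) (hqp n i))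
      _ = 2 * e n * r i := by ring
  have hmqy : Tendsto (fun n => (∑ i ∈ Finset.range (M n), q n i * Y i) / (M n))
      atTop (𝓝 mpy) := by
    refine tendsto_mean_perturbed (r := fun i => r i * |Y i|) hM (fun n i => ?_) he hmpy hmry
    have : q n i * Y i - p i * Y i = (q n i - p i) * Y i := by ring
    rw [this, abs_mul]
    calc |q n i - p i| * |Y i| ≤ (e n * r i) * |Y i| :=
          mul_le_mul_of_nonneg_right (hqp n i) (abs_nonneg _)
      _ = e n * (r i * |Y i|) := by ring
  -- denominators and numerators normalized by M n
  have hnum : Tendsto (fun n => (∑ i ∈ Finset.range (M n), q n i * Y i) / (M n)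
      - ((∑ j ∈ Finset.range (M n), q n j) / (M n)) * ((∑ j ∈ Finset.range (M n), Y j) / (M n)))
      atTop (𝓝 (τ * v)) := by
    rw [← hcov]
    exact hmqy.sub (hmq.mul (hmy.comp hM))
  have hden : Tendsto (fun n => (∑ i ∈ Finset.range (M n), (q n i) ^ 2) / (M n)
      - ((∑ j ∈ Finset.range (M n), q n j) / (M n)) ^ 2)
      atTop (𝓝 v) := by
    have h := hmq2.sub (hmq.mul hmq)
    have hvv : mp2 - mp * mp = v := by rw [← hvdef]; ring
    rw [← hvv]
    exact h.congr fun n => by ring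
  have hratio := hnum.div hden (ne_of_gt hv)
  rw [mul_div_assoc, div_self (ne_of_gt hv), mul_one] at hratio
  -- identify the ratio with the original expression, eventually in n
  have hev : ∀ᶠ n in atTop, (0:ℝ) < M n := by
    filter_upwards [hM.eventually_ge_atTop 1] with n hn
    exact_mod_cast hn
  refine Tendsto.congr' ?_ hratio
  filter_upwards [hev] with n hn
  have hNne : ((M n : ℕ) : ℝ) ≠ 0 := ne_of_gt hn
  have hnum_eq := centered_sum_div (M n) hNne (fun i => q n i) Y
  have hden_eq := centered_sum_div (M n) hNne (fun i => q n i) (fun i => q n i)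
  have hden_eq' : (∑ i ∈ Finset.range (M n),
        (q n i - (∑ j ∈ Finset.range (M n), q n j) / (M n)) ^ 2) / (M n)
      = (∑ i ∈ Finset.range (M n), (q n i) ^ 2) / (M n)
        - ((∑ j ∈ Finset.range (M n), q n j) / (M n)) ^ 2 := by
    simp only [pow_two]
    exact hden_eq
  simp only [Pi.div_apply]
  rw [← hnum_eq, ← hden_eq', div_div_div_same _ _ _ hNne]

lemma tendstoInMeasure_of_subseq {α E : Type*} {m : MeasurableSpace α} {μ : Measure α}
    [MetricSpace E] {f : ℕ → α → E} {g : α → E}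
    (h : ∀ ns : ℕ → ℕ, StrictMono ns → ∃ ms : ℕ → ℕ, StrictMono ms ∧
      TendstoInMeasure μ (fun n => f (ns (ms n))) atTop g) :
    TendstoInMeasure μ f atTop g := by
  intro ε hε
  by_contra hcon
  rw [Filter.not_tendsto_iff_exists_frequently_notMem] at hcon
  obtain ⟨s, hs, hfreq⟩ := hcon
  obtain ⟨ns, hns_mono, hns⟩ := Filter.extraction_of_frequently_atTop hfreq
  obtain ⟨ms, hms_mono, htm⟩ := h ns hns_mono
  have := htm ε hε
  have hev := this.eventually (eventually_mem_set.2 hs)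
  obtain ⟨n, hn⟩ := hev.exists
  exact hns (ms n) hn

lemma abs_dotProduct_le {k : ℕ} (r v : Fin k → ℝ) : |r ⬝ᵥ v| ≤ k * (‖r‖ * ‖v‖) := by
  rw [dotProduct]
  refine (Finset.abs_sum_le_sum_abs _ _).trans ?_
  have : ∀ i : Fin k, |r i * v i| ≤ ‖r‖ * ‖v‖ := by
    intro i
    rw [abs_mul]
    exact mul_le_mul (norm_le_pi_norm r i) (norm_le_pi_norm v i) (abs_nonneg _) (norm_nonneg _)
  refine (Finset.sum_le_sum fun i _ => this i).trans ?_
  simp [Finset.sum_const, Finset.card_univ]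

lemma measurable_dotProduct {k : ℕ} {α : Type*} [MeasurableSpace α]
    {f g : α → Fin k → ℝ} (hf : Measurable f) (hg : Measurable g) :
    Measurable (fun a => f a ⬝ᵥ g a) := by
  simp only [dotProduct]
  exact Finset.measurable_sum _ fun i _ =>
    ((measurable_pi_apply i).comp hf).mul ((measurable_pi_apply i).comp hg)


/-- **Consistency of the two-step first-differenced DID estimator.**  In the model
`ΔY = δ + τ·D* + Δξ` with probit treatment `D* = 1{⟪R, γ⟫ + U ≥ 0}` and exogenous error
(`E[Δξ | σ(R)] = 0`), the slope from regressing `ΔY` on a constant and the predicted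
probability `Φ(⟪R, γ̂_N⟫)` (with `γ̂_N →ᵖ γ`) converges in probability to `τ`. -/
theorem two_step_fd_estimator_consistent
    {Ω : Type*} [MeasureSpace Ω] [IsProbabilityMeasure (ℙ : Measure Ω)]
    {k : ℕ} (V : ℕ → Ω → ℝ × (Fin k → ℝ) × ℝ × ℝ × ℝ)
    (γ : Fin k → ℝ) (δ τ : ℝ)
    (hmeas : ∀ i, Measurable (V i))
    (hindep : iIndepFun V (ℙ : Measure Ω))
    (hident : ∀ i, IdentDistrib (V i) (V 0) (ℙ : Measure Ω) (ℙ : Measure Ω))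
    -- probit structure: D*ᵢ = 1{⟪Rᵢ, γ⟫ + Uᵢ ≥ 0}
    (hDs : ∀ i ω, (V i ω).2.2.2.1
      = Set.indicator {ω' | 0 ≤ (V i ω').2.1 ⬝ᵥ γ + (V i ω').2.2.1} (fun _ => (1 : ℝ)) ω)
    -- U independent of R, standard Gaussian
    (hUR : IndepFun (fun ω => (V 0 ω).2.2.1) (fun ω => (V 0 ω).2.1) (ℙ : Measure Ω))
    (hUgauss : Measure.map (fun ω => (V 0 ω).2.2.1) (ℙ : Measure Ω) = gaussianReal 0 1)
    -- exogenous error: E[Δξ | σ(R)] = 0 a.s.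
    (hexog : (ℙ : Measure Ω)[(fun ω => (V 0 ω).2.2.2.2) |
        MeasurableSpace.comap (fun ω => (V 0 ω).2.1) inferInstance]
      =ᵐ[(ℙ : Measure Ω)] fun _ => (0 : ℝ))
    -- outcome equation: ΔYᵢ = δ + τ·D*ᵢ + Δξᵢ a.s.
    (hmodel : ∀ i, ∀ᵐ ω ∂(ℙ : Measure Ω),
      (V i ω).1 = δ + τ * (V i ω).2.2.2.1 + (V i ω).2.2.2.2)
    -- moment conditions
    (hYsq : MemLp (fun ω => (V 0 ω).1) 2 (ℙ : Measure Ω))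
    (hRsq : MemLp (fun ω => (V 0 ω).2.1) 2 (ℙ : Measure Ω))
    (hRY : Integrable (fun ω => ‖(V 0 ω).2.1‖ * |(V 0 ω).1|))
    -- first-step estimator
    (γhat : ℕ → Ω → (Fin k → ℝ)) (hγmeas : ∀ N, Measurable (γhat N))
    (hγconv : TendstoInMeasure (ℙ : Measure Ω) γhat atTop (fun _ => γ))
    -- nondegeneracy
    (hvar : 0 < variance (fun ω => stdNormalCDF ((V 0 ω).2.1 ⬝ᵥ γ)) (ℙ : Measure Ω)) :
    TendstoInMeasure (ℙ : Measure Ω)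
      (fun N ω =>
        (∑ i : Fin N,
            (stdNormalCDF ((V i ω).2.1 ⬝ᵥ γhat N ω)
                - (∑ j : Fin N, stdNormalCDF ((V j ω).2.1 ⬝ᵥ γhat N ω)) / (N : ℝ))
              * ((V i ω).1 - (∑ j : Fin N, (V j ω).1) / (N : ℝ)))
        / (∑ i : Fin N,
            (stdNormalCDF ((V i ω).2.1 ⬝ᵥ γhat N ω)
                - (∑ j : Fin N, stdNormalCDF ((V j ω).2.1 ⬝ᵥ γhat N ω)) / (N : ℝ)) ^ 2))
      atTop (fun _ => τ) := by
  classical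
  -- basic measurable components
  have hRmeas : Measurable (fun ω => (V 0 ω).2.1) := (measurable_fst.comp measurable_snd).comp (hmeas 0)
  have hUmeas : Measurable (fun ω => (V 0 ω).2.2.1) :=
    (measurable_fst.comp (measurable_snd.comp measurable_snd)).comp (hmeas 0)
  have hYmeas : Measurable (fun ω => (V 0 ω).1) := measurable_fst.comp (hmeas 0)
  -- population quantities
  set p0 : Ω → ℝ := fun ω => stdNormalCDF ((V 0 ω).2.1 ⬝ᵥ γ) with hp0
  have hp0meas : Measurable p0 :=
    measurable_stdNormalCDF.comp (measurable_dotProduct hRmeas measurable_const)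
  have hp0bdd : ∀ ω, |p0 ω| ≤ 1 := fun ω => by
    rw [abs_of_nonneg (stdNormalCDF_nonneg _)]; exact stdNormalCDF_le_one _
  have hDmeas : Measurable (fun ω => (V 0 ω).2.2.2.1) :=
    (measurable_fst.comp (measurable_snd.comp (measurable_snd.comp measurable_snd))).comp (hmeas 0)
  have hξmeas : Measurable (fun ω => (V 0 ω).2.2.2.2) :=
    (measurable_snd.comp (measurable_snd.comp (measurable_snd.comp measurable_snd))).comp (hmeas 0)
  have hYint : Integrable (fun ω => (V 0 ω).1) := hYsq.integrable one_le_two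
  have intbdd : ∀ {f : Ω → ℝ}, Measurable f → (∀ ω, |f ω| ≤ 1) → Integrable f := by
    intro f hf hb
    refine (integrable_const (1:ℝ)).mono' hf.aestronglyMeasurable ?_
    filter_upwards with ω
    simpa [Real.norm_eq_abs] using hb ω
  have hp0int : Integrable p0 := intbdd hp0meas hp0bdd
  have hD_eq : ∀ ω, (V 0 ω).2.2.2.1
      = if 0 ≤ (V 0 ω).2.1 ⬝ᵥ γ + (V 0 ω).2.2.1 then (1:ℝ) else 0 := by
    intro ω
    rw [hDs 0 ω]
    simp [Set.indicator_apply, Set.mem_setOf_eq]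
  have hDbdd : ∀ ω, |(V 0 ω).2.2.2.1| ≤ 1 := by
    intro ω; rw [hD_eq ω]
    split <;> simp
  have hDint : Integrable (fun ω => (V 0 ω).2.2.2.1) := intbdd hDmeas hDbdd
  -- E[D] = E[p0]
  have hED : ∫ ω, (V 0 ω).2.2.2.1 ∂(ℙ : Measure Ω) = ∫ ω, p0 ω ∂(ℙ : Measure Ω) := by
    have e1 := gauss_indicator_integral (fun ω => (V 0 ω).2.1) (fun ω => (V 0 ω).2.2.1)
      hRmeas hUmeas hUR hUgauss γ (fun _ => 1) measurable_const (by simp)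
    simp only [one_mul] at e1
    rw [← e1]
    exact integral_congr_ae (ae_of_all _ fun ω => hD_eq ω)
  -- E[p0 * D] = E[p0 ^ 2]
  have hEpD : ∫ ω, p0 ω * (V 0 ω).2.2.2.1 ∂(ℙ : Measure Ω)
      = ∫ ω, p0 ω ^ 2 ∂(ℙ : Measure Ω) := by
    have e2 := gauss_indicator_integral (fun ω => (V 0 ω).2.1) (fun ω => (V 0 ω).2.2.1)
      hRmeas hUmeas hUR hUgauss γ (fun r => stdNormalCDF (r ⬝ᵥ γ))
      (measurable_stdNormalCDF.comp (measurable_dotProduct measurable_id measurable_const))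
      (fun r => by
        rw [abs_of_nonneg (stdNormalCDF_nonneg _)]; exact stdNormalCDF_le_one _)
    calc ∫ ω, p0 ω * (V 0 ω).2.2.2.1 ∂(ℙ : Measure Ω)
        = ∫ ω, stdNormalCDF ((V 0 ω).2.1 ⬝ᵥ γ)
            * (if 0 ≤ (V 0 ω).2.1 ⬝ᵥ γ + (V 0 ω).2.2.1 then (1:ℝ) else 0) ∂(ℙ : Measure Ω) := by
          refine integral_congr_ae (ae_of_all _ fun ω => ?_)
          simp only [hp0]
          rw [hD_eq ω]
      _ = ∫ ω, stdNormalCDF ((V 0 ω).2.1 ⬝ᵥ γ) * stdNormalCDF ((V 0 ω).2.1 ⬝ᵥ γ) ∂(ℙ : Measure Ω) := e2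
      _ = ∫ ω, p0 ω ^ 2 ∂(ℙ : Measure Ω) := by
          exact integral_congr_ae (ae_of_all _ fun ω => by simp only [hp0, pow_two])
  -- conditional expectation facts
  have hm : MeasurableSpace.comap (fun ω => (V 0 ω).2.1) inferInstance
      ≤ (MeasureSpace.toMeasurableSpace : MeasurableSpace Ω) := hRmeas.comap_le
  have hξae : (fun ω => (V 0 ω).2.2.2.2)
      =ᵐ[(ℙ : Measure Ω)] fun ω => (V 0 ω).1 - δ - τ * (V 0 ω).2.2.2.1 := by
    filter_upwards [hmodel 0] with ω hω
    rw [hω]; ring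
  have hξint : Integrable (fun ω => (V 0 ω).2.2.2.2) := by
    refine Integrable.congr ?_ hξae.symm
    exact (hYint.sub (integrable_const δ)).sub (hDint.const_mul τ)
  have hEξ : ∫ ω, (V 0 ω).2.2.2.2 ∂(ℙ : Measure Ω) = 0 := by
    rw [← integral_condExp hm (μ := (ℙ : Measure Ω)) (f := fun ω => (V 0 ω).2.2.2.2)]
    rw [integral_congr_ae hexog, integral_zero]
  have hp0m : Measurable[MeasurableSpace.comap (fun ω => (V 0 ω).2.1) inferInstance] p0 := by
    have hRm : Measurable[MeasurableSpace.comap (fun ω => (V 0 ω).2.1) inferInstance]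
        (fun ω => (V 0 ω).2.1) := Measurable.of_comap_le le_rfl
    exact (measurable_stdNormalCDF.comp
      (measurable_dotProduct measurable_id measurable_const)).comp hRm
  have hpξint : Integrable (fun ω => p0 ω * (V 0 ω).2.2.2.2) := by
    refine hξint.abs.mono' (hp0meas.mul hξmeas).aestronglyMeasurable ?_
    filter_upwards with ω
    rw [Real.norm_eq_abs, abs_mul]
    calc |p0 ω| * |(V 0 ω).2.2.2.2| ≤ 1 * |(V 0 ω).2.2.2.2| :=
          mul_le_mul_of_nonneg_right (hp0bdd ω) (abs_nonneg _)
      _ = |(V 0 ω).2.2.2.2| := one_mul _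
  have hEpξ : ∫ ω, p0 ω * (V 0 ω).2.2.2.2 ∂(ℙ : Measure Ω) = 0 := by
    have hmul := condExp_mul_of_stronglyMeasurable_left (μ := (ℙ : Measure Ω))
      (m := MeasurableSpace.comap (fun ω => (V 0 ω).2.1) inferInstance)
      hp0m.stronglyMeasurable (f := p0) (g := fun ω => (V 0 ω).2.2.2.2) hpξint hξint
    have : (ℙ : Measure Ω)[(fun ω => p0 ω * (V 0 ω).2.2.2.2) |
        MeasurableSpace.comap (fun ω => (V 0 ω).2.1) inferInstance]
        =ᵐ[(ℙ : Measure Ω)] fun _ => (0:ℝ) := by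
      refine hmul.trans ?_
      filter_upwards [hexog] with ω hω
      simp only [Pi.mul_apply, hω, mul_zero]
    rw [← integral_condExp hm (μ := (ℙ : Measure Ω))
      (f := fun ω => p0 ω * (V 0 ω).2.2.2.2), integral_congr_ae this, integral_zero]
  -- population constants
  set Ep := ∫ ω, p0 ω ∂(ℙ : Measure Ω) with hEp
  set Ep2 := ∫ ω, p0 ω ^ 2 ∂(ℙ : Measure Ω) with hEp2
  set Epy := ∫ ω, p0 ω * (V 0 ω).1 ∂(ℙ : Measure Ω) with hEpy
  set Ey := ∫ ω, (V 0 ω).1 ∂(ℙ : Measure Ω) with hEy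
  have hp2int : Integrable (fun ω => p0 ω ^ 2) := by
    refine intbdd (hp0meas.pow_const 2) fun ω => ?_
    rw [abs_pow, pow_two]
    calc |p0 ω| * |p0 ω| ≤ 1 * 1 :=
      mul_le_mul (hp0bdd ω) (hp0bdd ω) (abs_nonneg _) zero_le_one
    _ = 1 := one_mul 1
  have hpyint : Integrable (fun ω => p0 ω * (V 0 ω).1) := by
    refine hYint.abs.mono' (hp0meas.mul hYmeas).aestronglyMeasurable ?_
    filter_upwards with ω
    rw [Real.norm_eq_abs, abs_mul]
    calc |p0 ω| * |(V 0 ω).1| ≤ 1 * |(V 0 ω).1| :=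
          mul_le_mul_of_nonneg_right (hp0bdd ω) (abs_nonneg _)
      _ = |(V 0 ω).1| := one_mul _
  -- Ey = δ + τ * Ep
  have hEy_id : Ey = δ + τ * Ep := by
    have h1 : Ey = ∫ ω, (δ + τ * (V 0 ω).2.2.2.1 + (V 0 ω).2.2.2.2) ∂(ℙ : Measure Ω) :=
      integral_congr_ae (by filter_upwards [hmodel 0] with ω hω; exact hω)
    have hint1 : Integrable (fun ω => δ + τ * (V 0 ω).2.2.2.1) (ℙ : Measure Ω) := by
      simpa using (integrable_const δ).add (hDint.const_mul τ)
    rw [h1, integral_add hint1 hξint, integral_add (integrable_const δ) (hDint.const_mul τ),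
      integral_const, integral_const_mul, hED, hEξ]
    simp [hEp]
  -- Epy = δ * Ep + τ * Ep2
  have hEpy_id : Epy = δ * Ep + τ * Ep2 := by
    have h1 : Epy = ∫ ω, (p0 ω * δ + τ * (p0 ω * (V 0 ω).2.2.2.1) + p0 ω * (V 0 ω).2.2.2.2)
        ∂(ℙ : Measure Ω) := by
      rw [hEpy]
      refine integral_congr_ae ?_
      filter_upwards [hmodel 0] with ω hω
      rw [hω]; ring
    have hpDint : Integrable (fun ω => p0 ω * (V 0 ω).2.2.2.1) := by
      refine intbdd (hp0meas.mul hDmeas) fun ω => ?_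
      rw [abs_mul]
      calc |p0 ω| * |(V 0 ω).2.2.2.1| ≤ 1 * 1 :=
        mul_le_mul (hp0bdd ω) (hDbdd ω) (abs_nonneg _) zero_le_one
      _ = 1 := one_mul 1
    have hint2 : Integrable (fun ω => p0 ω * δ + τ * (p0 ω * (V 0 ω).2.2.2.1))
        (ℙ : Measure Ω) := by
      exact (hp0int.mul_const δ).add (hpDint.const_mul τ)
    rw [h1, integral_add hint2 hpξint,
      integral_add (hp0int.mul_const δ) (hpDint.const_mul τ),
      integral_mul_const, integral_const_mul, hEpD, hEpξ]
    rw [hEp, hEp2]; ring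
  -- variance identity
  have hvar_id : Ep2 - Ep ^ 2 = variance p0 (ℙ : Measure Ω) := by
    have hmem : MemLp p0 2 (ℙ : Measure Ω) :=
      MemLp.of_bound hp0meas.aestronglyMeasurable 1
        (ae_of_all _ fun ω => by rw [Real.norm_eq_abs]; exact hp0bdd ω)
    rw [variance_eq_sub hmem]
    rfl
  have hcov_id : Epy - Ep * Ey = τ * variance p0 (ℙ : Measure Ω) := by
    rw [hEpy_id, hEy_id, ← hvar_id]; ring
  -- strong law of large numbers for derived sequences
  have lln : ∀ (g : ℝ × (Fin k → ℝ) × ℝ × ℝ × ℝ → ℝ), Measurable g →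
      Integrable (fun ω => g (V 0 ω)) (ℙ : Measure Ω) →
      ∀ᵐ ω ∂(ℙ : Measure Ω), Tendsto (fun N : ℕ => (∑ i ∈ Finset.range N, g (V i ω)) / N)
        atTop (𝓝 (∫ ω, g (V 0 ω) ∂(ℙ : Measure Ω))) := by
    intro g hg hgint
    have hpair : Pairwise (Function.onFun (IndepFun · · (ℙ : Measure Ω)) (fun i ω => g (V i ω))) := by
      intro i j hij
      exact (hindep.indepFun hij).comp hg hg
    have hid : ∀ i, IdentDistrib (fun ω => g (V i ω)) (fun ω => g (V 0 ω))
        (ℙ : Measure Ω) (ℙ : Measure Ω) := fun i => (hident i).comp hg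
    exact strong_law_ae_real _ hgint hpair hid
  have hg1meas : Measurable (fun x : ℝ × (Fin k → ℝ) × ℝ × ℝ × ℝ => stdNormalCDF (x.2.1 ⬝ᵥ γ)) :=
    measurable_stdNormalCDF.comp
      (measurable_dotProduct (measurable_fst.comp measurable_snd) measurable_const)
  have hRnormmeas : Measurable (fun x : ℝ × (Fin k → ℝ) × ℝ × ℝ × ℝ => ‖x.2.1‖) :=
    (measurable_fst.comp measurable_snd).norm
  have A1 := lln _ hg1meas hp0int
  have A2 := lln (fun x => stdNormalCDF (x.2.1 ⬝ᵥ γ) ^ 2) (hg1meas.pow_const 2) hp2int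
  have A3 := lln (fun x => stdNormalCDF (x.2.1 ⬝ᵥ γ) * x.1) (hg1meas.mul measurable_fst) hpyint
  have A4 := lln (fun x => x.1) measurable_fst hYint
  have A5 := lln (fun x => ‖x.2.1‖) hRnormmeas (hRsq.integrable one_le_two).norm
  have A6 := lln (fun x => ‖x.2.1‖ * |x.1|) (hRnormmeas.mul measurable_fst.abs) hRY
  -- measurability of the estimator
  have hqmeas : ∀ N i : ℕ, Measurable (fun ω => stdNormalCDF ((V i ω).2.1 ⬝ᵥ γhat N ω)) :=
    fun N i => measurable_stdNormalCDF.comp (measurable_dotProduct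
      ((measurable_fst.comp measurable_snd).comp (hmeas i)) (hγmeas N))
  have hEstmeas : ∀ N : ℕ, Measurable (fun ω =>
      (∑ i ∈ Finset.range N,
          (stdNormalCDF ((V i ω).2.1 ⬝ᵥ γhat N ω)
              - (∑ j ∈ Finset.range N, stdNormalCDF ((V j ω).2.1 ⬝ᵥ γhat N ω)) / (N : ℝ))
            * ((V i ω).1 - (∑ j ∈ Finset.range N, (V j ω).1) / (N : ℝ)))
      / (∑ i ∈ Finset.range N,
          (stdNormalCDF ((V i ω).2.1 ⬝ᵥ γhat N ω)
              - (∑ j ∈ Finset.range N, stdNormalCDF ((V j ω).2.1 ⬝ᵥ γhat N ω)) / (N : ℝ)) ^ 2)) := by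
    intro N
    have hsq : Measurable (fun ω => ∑ j ∈ Finset.range N,
        stdNormalCDF ((V j ω).2.1 ⬝ᵥ γhat N ω)) :=
      Finset.measurable_sum _ fun j _ => hqmeas N j
    have hsY : Measurable (fun ω => ∑ j ∈ Finset.range N, (V j ω).1) :=
      Finset.measurable_sum _ fun j _ => measurable_fst.comp (hmeas j)
    refine Measurable.div ?_ ?_
    · exact Finset.measurable_sum _ fun i _ =>
        (((hqmeas N i).sub (hsq.div_const _)).mul
          ((measurable_fst.comp (hmeas i)).sub (hsY.div_const _)))
    · exact Finset.measurable_sum _ fun i _ =>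
        (((hqmeas N i).sub (hsq.div_const _)).pow_const 2)
  -- rewrite Fin sums as range sums
  have hfun : (fun (N : ℕ) (ω : Ω) =>
      (∑ i : Fin N,
          (stdNormalCDF ((V i ω).2.1 ⬝ᵥ γhat N ω)
              - (∑ j : Fin N, stdNormalCDF ((V j ω).2.1 ⬝ᵥ γhat N ω)) / (N : ℝ))
            * ((V i ω).1 - (∑ j : Fin N, (V j ω).1) / (N : ℝ)))
      / (∑ i : Fin N,
          (stdNormalCDF ((V i ω).2.1 ⬝ᵥ γhat N ω)
              - (∑ j : Fin N, stdNormalCDF ((V j ω).2.1 ⬝ᵥ γhat N ω)) / (N : ℝ)) ^ 2))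
      = (fun (N : ℕ) (ω : Ω) =>
      (∑ i ∈ Finset.range N,
          (stdNormalCDF ((V i ω).2.1 ⬝ᵥ γhat N ω)
              - (∑ j ∈ Finset.range N, stdNormalCDF ((V j ω).2.1 ⬝ᵥ γhat N ω)) / (N : ℝ))
            * ((V i ω).1 - (∑ j ∈ Finset.range N, (V j ω).1) / (N : ℝ)))
      / (∑ i ∈ Finset.range N,
          (stdNormalCDF ((V i ω).2.1 ⬝ᵥ γhat N ω)
              - (∑ j ∈ Finset.range N, stdNormalCDF ((V j ω).2.1 ⬝ᵥ γhat N ω)) / (N : ℝ)) ^ 2)) := by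
    funext N ω
    rw [Fin.sum_univ_eq_sum_range (fun j => stdNormalCDF ((V j ω).2.1 ⬝ᵥ γhat N ω)) N,
      Fin.sum_univ_eq_sum_range (fun j => (V j ω).1) N,
      Fin.sum_univ_eq_sum_range (fun i =>
        (stdNormalCDF ((V i ω).2.1 ⬝ᵥ γhat N ω)
            - (∑ j ∈ Finset.range N, stdNormalCDF ((V j ω).2.1 ⬝ᵥ γhat N ω)) / (N : ℝ))
          * ((V i ω).1 - (∑ j ∈ Finset.range N, (V j ω).1) / (N : ℝ))) N,
      Fin.sum_univ_eq_sum_range (fun i =>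
        (stdNormalCDF ((V i ω).2.1 ⬝ᵥ γhat N ω)
            - (∑ j ∈ Finset.range N, stdNormalCDF ((V j ω).2.1 ⬝ᵥ γhat N ω)) / (N : ℝ)) ^ 2) N]
  rw [hfun]
  -- subsequence argument
  apply tendstoInMeasure_of_subseq
  intro ns hns
  have h1 : TendstoInMeasure (ℙ : Measure Ω) (fun n => γhat (ns n)) atTop (fun _ => γ) :=
    fun ε hε => (hγconv ε hε).comp hns.tendsto_atTop
  obtain ⟨ms, hms, hae⟩ := h1.exists_seq_tendsto_ae
  refine ⟨ms, hms, ?_⟩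
  apply tendstoInMeasure_of_tendsto_ae
    (fun n => (hEstmeas (ns (ms n))).aestronglyMeasurable)
  filter_upwards [hae, A1, A2, A3, A4, A5, A6] with ω hγω h1ω h2ω h3ω h4ω h5ω h6ω
  -- pointwise application of the deterministic lemma
  have hM : Tendsto (fun n => ns (ms n)) atTop atTop := (hns.comp hms).tendsto_atTop
  have heconv : Tendsto (fun n => (Real.sqrt (2 * Real.pi))⁻¹
      * ((k : ℝ) * ‖γhat (ns (ms n)) ω - γ‖)) atTop (𝓝 0) := by
    have h0 : Tendsto (fun n => ‖γhat (ns (ms n)) ω - γ‖) atTop (𝓝 0) :=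
      tendsto_iff_norm_sub_tendsto_zero.mp hγω
    have := (h0.const_mul ((Real.sqrt (2 * Real.pi))⁻¹ * (k : ℝ)))
    simpa [mul_assoc] using this
  refine det_estimator_tendsto (p := fun i => stdNormalCDF ((V i ω).2.1 ⬝ᵥ γ))
    (Y := fun i => (V i ω).1) (r := fun i => ‖(V i ω).2.1‖)
    (q := fun n i => stdNormalCDF ((V i ω).2.1 ⬝ᵥ γhat (ns (ms n)) ω))
    (e := fun n => (Real.sqrt (2 * Real.pi))⁻¹ * ((k : ℝ) * ‖γhat (ns (ms n)) ω - γ‖))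
    (M := fun n => ns (ms n))
    (mp := Ep) (mp2 := Ep2) (mpy := Epy) (my := Ey)
    (mr := ∫ ω, ‖(V 0 ω).2.1‖ ∂(ℙ : Measure Ω))
    (mry := ∫ ω, ‖(V 0 ω).2.1‖ * |(V 0 ω).1| ∂(ℙ : Measure Ω))
    (v := variance p0 (ℙ : Measure Ω)) (τ := τ)
    hM ?_ ?_ heconv h1ω h2ω h3ω h4ω h5ω h6ω hcov_id hvar_id hvar
  · -- Lipschitz bound
    intro n i
    calc |stdNormalCDF ((V i ω).2.1 ⬝ᵥ γhat (ns (ms n)) ω)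
          - stdNormalCDF ((V i ω).2.1 ⬝ᵥ γ)|
        ≤ (Real.sqrt (2 * Real.pi))⁻¹ * |(V i ω).2.1 ⬝ᵥ γhat (ns (ms n)) ω
            - (V i ω).2.1 ⬝ᵥ γ| := lipschitz_stdNormalCDF
      _ = (Real.sqrt (2 * Real.pi))⁻¹ * |(V i ω).2.1 ⬝ᵥ (γhat (ns (ms n)) ω - γ)| := by
          rw [dotProduct_sub]
      _ ≤ (Real.sqrt (2 * Real.pi))⁻¹
            * ((k : ℝ) * (‖(V i ω).2.1‖ * ‖γhat (ns (ms n)) ω - γ‖)) := by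
          refine mul_le_mul_of_nonneg_left ?_ (by positivity)
          exact abs_dotProduct_le _ _
      _ = (Real.sqrt (2 * Real.pi))⁻¹ * ((k : ℝ) * ‖γhat (ns (ms n)) ω - γ‖)
            * ‖(V i ω).2.1‖ := by ring
  · -- boundedness
    intro n i
    calc |stdNormalCDF ((V i ω).2.1 ⬝ᵥ γhat (ns (ms n)) ω)
          + stdNormalCDF ((V i ω).2.1 ⬝ᵥ γ)| ≤ _ + _ := abs_add_le _ _
      _ ≤ 1 + 1 := by
          gcongr
          · rw [abs_of_nonneg (stdNormalCDF_nonneg _)]; exact stdNormalCDF_le_one _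
          · rw [abs_of_nonneg (stdNormalCDF_nonneg _)]; exact stdNormalCDF_le_one _
      _ = 2 := by norm_num
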